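/- For every function g from the darts of G to ℝ and every vertex u of G, the out-sum at u of the vector gᵀP̄ satisfies the exact identity: Σ_{v ∈ N(u)} (gᵀP̄)(u,v) = (1/2) · g^in(u) + Σ_{v ∈ N(u)} (g^out(v) − g(v,u)) / (2(deg(v) − 1)). -/

import Mathlib

open Finset Matrix

/-- The non-backtracking transition matrix of a simple graph, indexed by darts:
`P[(u→v),(x→y)] = 1/(deg v − 1)` if `v = x` and `u ≠ y`, and `0` otherwise. -/
noncomputable def nbMatrix {V : Type*} [Fintype V] [DecidableEq V] (G : SimpleGraph V)
    [DecidableRel G.Adj] : Matrix G.Dart G.Dart ℝ :=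
  fun e f => if e.snd = f.fst ∧ e.fst ≠ f.snd then 1 / ((G.degree e.snd : ℝ) - 1) else 0

/-- The symmetrized non-backtracking matrix `P̄ = (P + Pᵀ)/2`. -/
noncomputable def nbBar {V : Type*} [Fintype V] [DecidableEq V] (G : SimpleGraph V)
    [DecidableRel G.Adj] : Matrix G.Dart G.Dart ℝ :=
  (2 : ℝ)⁻¹ • (nbMatrix G + (nbMatrix G)ᵀ)

/-- Extend a function on darts of `G` to a function on ordered pairs of vertices, taking the
value `0` on non-adjacent pairs. -/
noncomputable def dartFun {V : Type*} (G : SimpleGraph V) [DecidableRel G.Adj]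
    (g : G.Dart → ℝ) (a b : V) : ℝ :=
  if h : G.Adj a b then g ⟨(a, b), h⟩ else 0

def dartEquiv {V : Type*} (G : SimpleGraph V) : G.Dart ≃ Σ a : V, G.neighborSet a where
  toFun d := ⟨d.fst, d.snd, d.adj⟩
  invFun p := ⟨(p.1, p.2.1), p.2.2⟩
  left_inv _ := rfl
  right_inv _ := rfl

lemma sum_darts {V : Type*} [Fintype V] [DecidableEq V] (G : SimpleGraph V) [DecidableRel G.Adj]
    (f : G.Dart → ℝ) :
    ∑ e : G.Dart, f e = ∑ a, ∑ b ∈ G.neighborFinset a, dartFun G f a b := by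
  rw [← Equiv.sum_comp (dartEquiv G).symm f, ← Finset.univ_sigma_univ, Finset.sum_sigma]
  refine Fintype.sum_congr _ _ fun a => ?_
  rw [SimpleGraph.neighborFinset_def, ← Finset.sum_set_coe (f := fun b => dartFun G f a b)]
  refine Fintype.sum_congr _ _ fun b => ?_
  simp only [dartFun, dartEquiv, Equiv.coe_fn_symm_mk]
  have h : G.Adj a ↑b := b.2
  simp [h]

lemma dartFun_eq_zero {V : Type*} (G : SimpleGraph V) [DecidableRel G.Adj]
    (g : G.Dart → ℝ) {a b : V} (h : ¬ G.Adj a b) : dartFun G g a b = 0 := dif_neg h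

lemma sum_mul_nb_left {V : Type*} [Fintype V] [DecidableEq V] (G : SimpleGraph V)
    [DecidableRel G.Adj] (g : G.Dart → ℝ) (e' : G.Dart) :
    ∑ e : G.Dart, g e * nbMatrix G e e' =
      (∑ a ∈ (G.neighborFinset e'.fst).erase e'.snd, dartFun G g a e'.fst) /
        ((G.degree e'.fst : ℝ) - 1) := by
  set x := e'.fst with hx
  set y := e'.snd with hy
  set c : ℝ := 1 / ((G.degree x : ℝ) - 1) with hc
  rw [sum_darts]
  have key : ∀ a b, dartFun G (fun e => g e * nbMatrix G e e') a b =
      dartFun G g a b * (if b = x ∧ a ≠ y then c else 0) := by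
    intro a b
    by_cases h : G.Adj a b
    · simp only [dartFun, dif_pos h, nbMatrix]
      by_cases hcnd : b = x ∧ a ≠ y
      · obtain ⟨h1, h2⟩ := hcnd
        subst h1
        simp [h2, hc, hx, hy]
      · simp only [hx, hy] at hcnd
        simp [hcnd, hx, hy]
    · simp [dartFun, dif_neg h]
  simp_rw [key]
  have inner : ∀ a, ∑ b ∈ G.neighborFinset a,
      dartFun G g a b * (if b = x ∧ a ≠ y then c else 0) =
      dartFun G g a x * (if a ≠ y then c else 0) := by
    intro a
    simp_rw [ite_and, mul_ite, mul_zero]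
    rw [Finset.sum_ite_eq' (G.neighborFinset a) x]
    by_cases hm : x ∈ G.neighborFinset a
    · simp [hm]
    · rw [if_neg hm,
        dartFun_eq_zero G g (fun h => hm ((SimpleGraph.mem_neighborFinset G a x).mpr h)),
        zero_mul, ite_self]
  simp_rw [inner]
  rw [Finset.sum_div]
  rw [← Finset.sum_subset (Finset.subset_univ ((G.neighborFinset x).erase y))
      (fun a _ ha => ?_)]
  · refine Finset.sum_congr rfl fun a ha => ?_
    have hay : a ≠ y := (Finset.mem_erase.mp ha).1
    rw [if_pos hay, hc]
    ring
  · by_cases hay : a = y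
    · simp [hay]
    · have hna : ¬ G.Adj a x := by
        intro h
        exact ha (Finset.mem_erase.mpr ⟨hay, (SimpleGraph.mem_neighborFinset G x a).mpr h.symm⟩)
      rw [dartFun_eq_zero G g hna, zero_mul]

lemma sum_mul_nb_right {V : Type*} [Fintype V] [DecidableEq V] (G : SimpleGraph V)
    [DecidableRel G.Adj] (g : G.Dart → ℝ) (e' : G.Dart) :
    ∑ e : G.Dart, g e * nbMatrix G e' e =
      (∑ b ∈ (G.neighborFinset e'.snd).erase e'.fst, dartFun G g e'.snd b) /
        ((G.degree e'.snd : ℝ) - 1) := by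
  set u := e'.fst with hu
  set v := e'.snd with hv
  set c : ℝ := 1 / ((G.degree v : ℝ) - 1) with hc
  rw [sum_darts]
  have key : ∀ a b, dartFun G (fun e => g e * nbMatrix G e' e) a b =
      dartFun G g a b * (if v = a ∧ u ≠ b then c else 0) := by
    intro a b
    by_cases h : G.Adj a b
    · simp only [dartFun, dif_pos h, nbMatrix]
      rfl
    · simp [dartFun, dif_neg h]
  simp_rw [key]
  rw [Finset.sum_eq_single v]
  · rw [← Finset.sum_erase (G.neighborFinset v)
      (f := fun b => dartFun G g v b * if v = v ∧ u ≠ b then c else 0) (a := u) (by simp)]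
    rw [Finset.sum_div]
    refine Finset.sum_congr rfl fun b hb => ?_
    have h1 : u ≠ b := fun h => (Finset.mem_erase.mp hb).1 h.symm
    rw [if_pos (⟨rfl, h1⟩ : v = v ∧ u ≠ b), hc]
    ring
  · intro a _ hav
    apply Finset.sum_eq_zero
    intro b _
    rw [if_neg (fun h => hav h.1.symm), mul_zero]
  · intro h
    exact absurd (Finset.mem_univ v) h

/-- The exact identity in the proof of Lemma 3.1 (before the mean-field approximation):
the out-sum at `u` of `gᵀP̄` equals
`(1/2)·g^in(u) + Σ_{v ∈ N(u)} (g^out(v) − g(v,u))/(2(deg v − 1))`. -/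
theorem out_sum_vecMul_nbBar
    {V : Type*} [Fintype V] [DecidableEq V] (G : SimpleGraph V) [DecidableRel G.Adj]
    (hdeg : ∀ v : V, 2 ≤ G.degree v)
    (g : G.Dart → ℝ) (u : V) :
    ∑ v ∈ G.neighborFinset u,
        dartFun G (fun e' : G.Dart => ∑ e : G.Dart, g e * nbBar G e e') u v =
      (1 / 2) * (∑ v ∈ G.neighborFinset u, dartFun G g v u) +
        ∑ v ∈ G.neighborFinset u,
          ((∑ w ∈ G.neighborFinset v, dartFun G g v w) - dartFun G g v u) /
            (2 * ((G.degree v : ℝ) - 1)) := by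
  have hdu : ((G.degree u : ℝ) - 1) ≠ 0 := by
    have := hdeg u
    have h2 : (2 : ℝ) ≤ (G.degree u : ℝ) := by exact_mod_cast this
    intro h
    nlinarith
  have step : ∀ v ∈ G.neighborFinset u,
      dartFun G (fun e' : G.Dart => ∑ e : G.Dart, g e * nbBar G e e') u v =
        (2 : ℝ)⁻¹ * ((∑ a ∈ (G.neighborFinset u).erase v, dartFun G g a u) /
            ((G.degree u : ℝ) - 1)) +
        (2 : ℝ)⁻¹ * ((∑ b ∈ (G.neighborFinset v).erase u, dartFun G g v b) /
            ((G.degree v : ℝ) - 1)) := by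
    intro v hv
    have h : G.Adj u v := (SimpleGraph.mem_neighborFinset G u v).mp hv
    set d : G.Dart := ⟨(u, v), h⟩ with hd
    have : dartFun G (fun e' : G.Dart => ∑ e : G.Dart, g e * nbBar G e e') u v =
        ∑ e : G.Dart, g e * nbBar G e d := by
      simp only [dartFun, dif_pos h]
      rfl
    rw [this]
    have hbar : ∀ e : G.Dart, g e * nbBar G e d =
        (2 : ℝ)⁻¹ * (g e * nbMatrix G e d) + (2 : ℝ)⁻¹ * (g e * nbMatrix G d e) := by
      intro e
      simp only [nbBar, Matrix.smul_apply, Matrix.add_apply, Matrix.transpose_apply,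
        smul_eq_mul]
      ring
    simp_rw [hbar]
    rw [Finset.sum_add_distrib, ← Finset.mul_sum, ← Finset.mul_sum,
      sum_mul_nb_left G g d, sum_mul_nb_right G g d]
  rw [Finset.sum_congr rfl step, Finset.sum_add_distrib]
  congr 1
  · -- first piece
    rw [← Finset.mul_sum, ← Finset.sum_div]
    have hsum : ∑ v ∈ G.neighborFinset u, ∑ a ∈ (G.neighborFinset u).erase v, dartFun G g a u
        = ((G.degree u : ℝ) - 1) * ∑ v ∈ G.neighborFinset u, dartFun G g v u := by
      rw [Finset.sum_congr rfl (fun v hv => Finset.sum_erase_eq_sub hv),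
        Finset.sum_sub_distrib, Finset.sum_const, SimpleGraph.card_neighborFinset_eq_degree,
        nsmul_eq_mul]
      ring
    rw [hsum, mul_div_cancel_left₀ _ hdu, one_div]
  · refine Finset.sum_congr rfl fun v hv => ?_
    have h : G.Adj u v := (SimpleGraph.mem_neighborFinset G u v).mp hv
    have hu : u ∈ G.neighborFinset v := (SimpleGraph.mem_neighborFinset G v u).mpr h.symm
    rw [Finset.sum_erase_eq_sub hu]
    rw [div_eq_mul_inv, div_eq_mul_inv, mul_inv]
    ring
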